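/- arXiv:1809.09036 — 2 statements merged into one kernel-verified Lean document; each statement's English description precedes it below -/
import Mathlib

section
/- For every integer n ≥ 2, the Lucas-Catalan polynomial satisfies C_{n} = {2n-1 choose n-1}_L + t · {2n-1 choose n-2}_L, as an identity of polynomials in Z[s,t]. -/
open MvPolynomial Finset

set_option synthInstance.maxHeartbeats 800000
set_option maxHeartbeats 1600000

noncomputable section

/-- Polynomial ring ℤ[s,t] with s = X 0, t = X 1. -/
abbrev P2 : Type := MvPolynomial (Fin 2) ℤ

def ps : P2 := X 0
def pt : P2 := X 1

/-- The Lucas sequence of polynomials: {0}=0, {1}=1, {n}=s{n-1}+t{n-2}. -/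
def lucas : ℕ → P2
  | 0 => 0
  | 1 => 1
  | (n+2) => ps * lucas (n+1) + pt * lucas n

/-- The Lucastorial {n}! = {1}{2}⋯{n}. -/
def lucasFact (n : ℕ) : P2 := ∏ i ∈ Finset.range n, lucas (i+1)

/-- The d-divisible Lucastorial {n:d}! = {d}{2d}⋯{nd}. -/
def lucasFactD (d n : ℕ) : P2 := ∏ i ∈ Finset.range n, lucas (d*(i+1))

/-- A polynomial lies in ℕ[s,t]: all coefficients are nonnegative. -/
def Nonneg (p : P2) : Prop := ∀ m, 0 ≤ p.coeff m

/-- The fraction field ℤ(s,t). -/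
abbrev K : Type := FractionRing P2

def φ : P2 →+* K := algebraMap P2 K

def L (n : ℕ) : K := φ (lucas n)

def LFact (n : ℕ) : K := φ (lucasFact n)

def LFactD (d n : ℕ) : K := φ (lucasFactD d n)

/-- The Lucasnomial {n choose k}, as an element of the fraction field. -/
def lnom (n k : ℕ) : K := LFact n / (LFact k * LFact (n-k))

/-- The d-divisible Lucasnomial {n:d choose k:d}, as an element of the fraction field. -/
def lnomD (d n k : ℕ) : K := LFactD d n / (LFactD d k * LFactD d (n-k))

/-- The Lucas-Catalan number C_{n} = (1/{n+1}) {2n choose n}. -/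
def catL (n : ℕ) : K := lnom (2*n) n / L (n+1)

/-- The Lucas-Fuss-Catalan number C_{n,k} = (1/{kn+1}) {(k+1)n choose n}. -/
def fussCatL (n k : ℕ) : K := lnom ((k+1)*n) n / L (k*n+1)


/-- Evaluation at s=1, t=0. -/
def ev : P2 →+* ℤ := (eval (fun i : Fin 2 => if i = 0 then 1 else 0) : P2 →+* ℤ)

lemma ev_lucas : ∀ n, ev (lucas (n+1)) = 1
  | 0 => by simp [lucas, ev]
  | 1 => by simp [lucas, ps, pt, ev]
  | (n+2) => by
      have h1 := ev_lucas (n+1)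
      have h2 := ev_lucas n
      show ev (ps * lucas (n+2) + pt * lucas (n+1)) = 1
      simp [ev, ps, pt] at h1 h2 ⊢
      simp [h1, h2]

lemma lucas_ne_zero (n : ℕ) : lucas (n+1) ≠ 0 := by
  intro h
  have := ev_lucas n
  rw [h] at this
  simp at this

lemma lucasFact_ne_zero (n : ℕ) : lucasFact n ≠ 0 := by
  unfold lucasFact
  rw [Finset.prod_ne_zero_iff]
  intro i _
  exact lucas_ne_zero i

lemma phi_inj : Function.Injective φ := IsFractionRing.injective P2 K

lemma L_ne_zero (n : ℕ) : L (n+1) ≠ 0 := by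
  unfold L
  rw [map_ne_zero_iff φ phi_inj]
  exact lucas_ne_zero n

lemma LFact_ne_zero (n : ℕ) : LFact n ≠ 0 := by
  unfold LFact
  rw [map_ne_zero_iff φ phi_inj]
  exact lucasFact_ne_zero n

lemma LFact_succ (n : ℕ) : LFact (n+1) = LFact n * L (n+1) := by
  unfold LFact L lucasFact
  rw [Finset.prod_range_succ, map_mul]

lemma lucas_add : ∀ b a, lucas (a+b+1) = lucas (a+1) * lucas (b+1) + pt * lucas a * lucas b
  | 0, a => by simp [lucas]
  | 1, a => by
      show lucas (a+2) = lucas (a+1) * lucas 2 + pt * lucas a * lucas 1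
      show ps * lucas (a+1) + pt * lucas a = lucas (a+1) * (ps * lucas 1 + pt * lucas 0) + pt * lucas a * lucas 1
      simp [lucas]; ring
  | (b+2), a => by
      have h1 := lucas_add (b+1) a
      have h2 := lucas_add b a
      have e1 : a + (b+2) + 1 = (a + b + 1) + 2 := by ring
      have e2 : a + (b+1) + 1 = a + b + 2 := by ring
      rw [e1]
      show ps * lucas (a+b+2) + pt * lucas (a+b+1) = _
      rw [e2] at h1
      rw [h1, h2]
      show _ = lucas (a+1) * (ps * lucas (b+2) + pt * lucas (b+1)) + pt * lucas a * (ps * lucas (b+1) + pt * lucas b)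
      ring

lemma L_double (m : ℕ) : L (2*m+4) = L (m+2) * (L (m+3) + φ pt * L (m+1)) := by
  have h := lucas_add (m+1) (m+2)
  have e : m + 2 + (m+1) + 1 = 2*m+4 := by ring
  rw [e] at h
  unfold L
  simp only [← map_mul, ← map_add]
  congr 1
  rw [h]; ring

lemma key (A F a b c t : K) (hF : F ≠ 0) (h1 : a ≠ 0) (h2 : b ≠ 0) (h3 : c ≠ 0) :
    A * (b * (c + t * a)) / ((F * a * b) * (F * a * b)) / c
      = A / ((F * a) * (F * a * b)) + t * (A / (F * (F * a * b * c))) := by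
  rw [div_div, mul_comm t (A / (F * (F * a * b * c))), div_mul_eq_mul_div,
    div_add_div _ _ (by simp [hF, h1, h2, h3, mul_ne_zero]) (by simp [hF, h1, h2, h3, mul_ne_zero]),
    div_eq_div_iff (by simp [hF, h1, h2, h3, mul_ne_zero]) (by simp [hF, h1, h2, h3, mul_ne_zero])]
  ring

/-- for n ≥ 2, C_{n} = {2n-1 choose n-1} + t {2n-1 choose n-2}. -/
theorem lucasCatalan_identity (n : ℕ) (hn : 2 ≤ n) :
    catL n = lnom (2*n-1) (n-1) + φ pt * lnom (2*n-1) (n-2) := by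
  obtain ⟨m, rfl⟩ : ∃ m, n = m + 2 := ⟨n - 2, by omega⟩
  have e1 : 2*(m+2) = 2*m+4 := by ring
  have e2 : 2*(m+2)-1 = 2*m+3 := by omega
  have e3 : m+2-1 = m+1 := by omega
  have e4 : m+2-2 = m := by omega
  have e5 : 2*m+3-(m+1) = m+2 := by omega
  have e6 : 2*m+3-m = m+3 := by omega
  have e7 : 2*m+4-(m+2) = m+2 := by omega
  unfold catL lnom
  rw [e2, e3, e4, e1, e5, e6, e7]
  rw [show 2*m+4 = (2*m+3)+1 from rfl, LFact_succ (2*m+3), L_double m]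
  rw [show m+3 = (m+2)+1 from rfl, LFact_succ (m+2),
      show m+2 = (m+1)+1 from rfl, LFact_succ (m+1),
      show m+1 = m+1 from rfl, LFact_succ m]
  have hA := LFact_ne_zero (2*m+3)
  have hF := LFact_ne_zero m
  have h1 := L_ne_zero m
  have h2 : L (m+2) ≠ 0 := L_ne_zero (m+1)
  have h3 : L (m+3) ≠ 0 := L_ne_zero (m+2)
  simp only [show m+1+1 = m+2 from rfl, show m+2+1 = m+3 from rfl]
  exact key _ _ _ _ _ _ hF h1 h2 h3
end
end

section
/- For all integers n ≥ 0 and k ≥ 1, the product {kn+1}·{n}!·{kn}! divides {(k+1)n}! in Z[s,t], and the quotient, i.e. the Lucas-Fuss-Catalan polynomial C_{n,k} = (1/{kn+1})·{(k+1)n choose n}_L, is a polynomial in s and t all of whose coefficients are nonnegative integers. -/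
open MvPolynomial Finset

noncomputable section

lemma lucas_zero : lucas 0 = 0 := rfl
lemma lucas_one : lucas 1 = 1 := rfl
lemma lucasFact_zero : lucasFact 0 = 1 := by simp [lucasFact]
lemma lucasFact_succ (n : ℕ) : lucasFact (n+1) = lucasFact n * lucas (n+1) := by
  rw [lucasFact, lucasFact, Finset.prod_range_succ]

-- closure lemmas
lemma nonneg_zero : Nonneg 0 := by intro m; simp
lemma nonneg_one : Nonneg 1 := by
  intro m; rw [MvPolynomial.coeff_one]; split <;> norm_num
lemma nonneg_add {p q : P2} (hp : Nonneg p) (hq : Nonneg q) : Nonneg (p+q) := by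
  intro m; rw [MvPolynomial.coeff_add]; exact add_nonneg (hp m) (hq m)
lemma nonneg_mul {p q : P2} (hp : Nonneg p) (hq : Nonneg q) : Nonneg (p*q) := by
  intro m; rw [MvPolynomial.coeff_mul]
  exact Finset.sum_nonneg fun x _ => mul_nonneg (hp _) (hq _)
lemma nonneg_pt : Nonneg pt := by
  intro m; rw [pt, MvPolynomial.coeff_X']; split <;> norm_num
lemma nonneg_ps : Nonneg ps := by
  intro m; rw [ps, MvPolynomial.coeff_X']; split <;> norm_num
lemma lucas_nonneg : ∀ n, Nonneg (lucas n)
  | 0 => nonneg_zero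
  | 1 => nonneg_one
  | (n+2) => by
      rw [lucas]
      exact nonneg_add (nonneg_mul nonneg_ps (lucas_nonneg (n+1)))
        (nonneg_mul nonneg_pt (lucas_nonneg n))

lemma lucas_two : lucas 2 = ps := by
  show ps * lucas 1 + pt * lucas 0 = ps
  rw [lucas_one, lucas_zero]; ring

lemma lucas_addf : ∀ b a : ℕ, lucas (a+b+1) = lucas (a+1) * lucas (b+1) + pt * (lucas a * lucas b)
  | 0, a => by rw [show (0:ℕ)+1 = 1 by norm_num, lucas_one, lucas_zero]; ring
  | 1, a => by
      have e : lucas (a+1+1) = ps * lucas (a+1) + pt * lucas a := rfl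
      have e2 : lucas (1+1) = ps := lucas_two
      rw [e, e2, lucas_one]; ring
  | (b+2), a => by
      have h1 := lucas_addf (b+1) a
      have h2 := lucas_addf b a
      have e1 : lucas (a+(b+2)+1) = ps * lucas (a+(b+1)+1) + pt * lucas (a+b+1) := rfl
      have e2 : lucas (b+2+1) = ps * lucas (b+1+1) + pt * lucas (b+1) := rfl
      have e3 : lucas (b+2) = ps * lucas (b+1) + pt * lucas b := rfl
      rw [e1, h1, h2, e2, e3]
      ring

-- Lucasnomial polynomials
def lb : ℕ → ℕ → P2
  | _, 0 => 1
  | 0, _+1 => 0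
  | (m+1), (k+1) => lucas (m - k + 1) * lb m k + pt * lucas k * lb m (k+1)

lemma lb_zero (m : ℕ) : lb m 0 = 1 := by cases m <;> rfl

lemma lb_nonneg : ∀ m k, Nonneg (lb m k)
  | m, 0 => by rw [lb_zero]; exact nonneg_one
  | 0, _+1 => nonneg_zero
  | (m+1), (k+1) => by
      rw [lb]
      exact nonneg_add (nonneg_mul (lucas_nonneg _) (lb_nonneg m k))
        (nonneg_mul (nonneg_mul nonneg_pt (lucas_nonneg k)) (lb_nonneg m (k+1)))

lemma lb_eq_zero : ∀ m k, m < k → lb m k = 0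
  | m, 0 => by omega
  | 0, k+1 => fun _ => rfl
  | (m+1), (k+1) => fun h => by
      rw [lb, lb_eq_zero m k (by omega), lb_eq_zero m (k+1) (by omega)]
      ring

lemma lb_diag : ∀ m, lb m m = 1
  | 0 => lb_zero 0
  | (m+1) => by
      rw [lb, lb_diag m, lb_eq_zero m (m+1) (by omega), Nat.sub_self, lucas_one]
      ring

lemma lb_fact : ∀ m k, k ≤ m → lucasFact m = lb m k * (lucasFact k * lucasFact (m-k))
  | m, 0 => fun _ => by
      rw [lb_zero, lucasFact_zero, Nat.sub_zero]; ring
  | 0, k+1 => fun h => by omega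
  | (m+1), (k+1) => fun h => by
      rcases Nat.lt_or_ge k m with hk | hk
      · -- k+1 ≤ m
        obtain ⟨d, rfl⟩ : ∃ d, m = k + d + 1 := ⟨m - k - 1, by omega⟩
        have IH1 := lb_fact (k+d+1) k (by omega)
        have IH2 := lb_fact (k+d+1) (k+1) (by omega)
        rw [show k+d+1-k = d+1 by omega] at IH1
        rw [show k+d+1-(k+1) = d by omega] at IH2
        rw [show k+d+1+1-(k+1) = d+1 by omega]
        have hunf : lb (k+d+1+1) (k+1) = lucas (k+d+1-k+1) * lb (k+d+1) k
            + pt * lucas k * lb (k+d+1) (k+1) := rfl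
        rw [hunf, show k+d+1-k+1 = d+2 by omega]
        have h1 : lucasFact (k+d+1+1) = lucasFact (k+d+1) * lucas (k+d+1+1) := lucasFact_succ _
        have h4 : lucas (k+d+1+1) = lucas (d+2) * lucas (k+1) + pt * (lucas (d+1) * lucas k) := by
          have := lucas_addf k (d+1)
          rw [show d+1+k+1 = k+d+1+1 by ring] at this
          exact this
        have h5 : lucasFact (d+1) = lucasFact d * lucas (d+1) := lucasFact_succ _
        have h6 : lucasFact (k+1) = lucasFact k * lucas (k+1) := lucasFact_succ _
        rw [h1, h4, h5, h6]
        rw [h5] at IH1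
        rw [h6] at IH2
        linear_combination (lucas (d+2) * lucas (k+1)) * IH1
          + (pt * lucas (d+1) * lucas k) * IH2
      · -- k = m
        obtain rfl : k = m := by omega
        rw [lb_diag, Nat.sub_self, lucasFact_zero]
        ring

-- the quotient {k*n}/{n}
def wseq (n : ℕ) : ℕ → P2
  | 0 => 0
  | (m+1) => lucas (m*n+1) + pt * lucas (n-1) * wseq n m

lemma wseq_nonneg (n : ℕ) : ∀ m, Nonneg (wseq n m)
  | 0 => nonneg_zero
  | (m+1) => by
      rw [wseq]
      exact nonneg_add (lucas_nonneg _)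
        (nonneg_mul (nonneg_mul nonneg_pt (lucas_nonneg _)) (wseq_nonneg n m))

lemma wseq_mul (n' : ℕ) : ∀ m, lucas (m*(n'+1)) = wseq (n'+1) m * lucas (n'+1)
  | 0 => by rw [Nat.zero_mul, lucas_zero, wseq]; ring
  | (m+1) => by
      have h := lucas_addf n' (m*(n'+1))
      rw [show m*(n'+1)+n'+1 = (m+1)*(n'+1) by ring] at h
      rw [h, wseq_mul n' m, wseq, show (n'+1)-1 = n' by omega]
      ring

/-- {kn+1}{n}!{kn}! divides {(k+1)n}! with quotient (the
Lucas-Fuss-Catalan polynomial) in ℕ[s,t]. -/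
theorem lucasFussCatalan_nonneg (n k : ℕ) (hk : 1 ≤ k) :
    ∃ p : P2, Nonneg p ∧
      lucasFact ((k+1)*n) = p * (lucas (k*n+1) * lucasFact n * lucasFact (k*n)) := by

  match n with
  | 0 =>
      refine ⟨1, nonneg_one, ?_⟩
      rw [Nat.mul_zero, Nat.mul_zero, lucasFact_zero, lucas_one]
      ring
  | 1 =>
      refine ⟨1, nonneg_one, ?_⟩
      rw [Nat.mul_one, Nat.mul_one, lucasFact_succ k,
        show lucasFact 1 = lucasFact 0 * lucas 1 from lucasFact_succ 0,
        lucasFact_zero, lucas_one]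
      ring
  | (m+2) =>
      obtain ⟨c, hc⟩ : ∃ c, c = k * (m+2) := ⟨_, rfl⟩
      have hcm : 2 ≤ c := by
        have h2 : m+2 ≤ k*(m+2) := Nat.le_mul_of_pos_left (m+2) hk
        omega
      refine ⟨lb (c+m+1) (m+1) + pt * wseq (m+2) k * lb (c+m+1) m, ?_, ?_⟩
      · exact nonneg_add (lb_nonneg _ _)
          (nonneg_mul (nonneg_mul nonneg_pt (wseq_nonneg (m+2) k)) (lb_nonneg _ _))
      · have hN : (k+1) * (m+2) = c+m+2 := by rw [hc]; ring
        rw [hN, ← hc]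
        have IH1 := lb_fact (c+m+1) (m+1) (by omega)
        have IH2 := lb_fact (c+m+1) m (by omega)
        rw [show c+m+1-(m+1) = c by omega] at IH1
        rw [show c+m+1-m = c+1 by omega] at IH2
        have h1 : lucasFact (c+m+2) = lucasFact (c+m+1) * lucas (c+m+2) := by
          have := lucasFact_succ (c+m+1)
          rw [show c+m+1+1 = c+m+2 by omega] at this
          exact this
        have h4 : lucas (c+m+2) = lucas (c+1) * lucas (m+2) + pt * (lucas c * lucas (m+1)) := by
          have := lucas_addf (m+1) c
          rw [show c+(m+1)+1 = c+m+2 by ring] at this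
          exact this
        have h5 : lucas c = wseq (m+2) k * lucas (m+2) := by
          rw [hc]; exact wseq_mul (m+1) k
        have h6 : lucasFact (m+2) = lucasFact (m+1) * lucas (m+2) := lucasFact_succ (m+1)
        have h7 : lucasFact (m+1) = lucasFact m * lucas (m+1) := lucasFact_succ m
        have h8 : lucasFact (c+1) = lucasFact c * lucas (c+1) := lucasFact_succ c
        rw [h1, h4, h5, h6, h7]
        rw [h7] at IH1
        rw [h8] at IH2
        linear_combination (lucas (c+1) * lucas (m+2)) * IH1
          + (pt * (wseq (m+2) k) * lucas (m+2) * lucas (m+1)) * IH2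
end
end
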